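/- Let A = ⋃_{i∈ℤ} [a_i, b_i) ⊂ ℝ be a disjoint union of half-open intervals of equal length with equal gaps (d(a_i, b_i) = L > 0 and d(b_i, a_{i+1}) = g > 0 for all i ∈ ℤ, b_i < a_{i+1}). Then (A, d) with the Euclidean metric is not plastic. -/

import Mathlib

def NonexpOn (φ : ℝ → ℝ) (A : Set ℝ) : Prop :=
  ∀ x ∈ A, ∀ y ∈ A, dist (φ x) (φ y) ≤ dist x y

def IsomOn (φ : ℝ → ℝ) (A : Set ℝ) : Prop :=
  ∀ x ∈ A, ∀ y ∈ A, dist (φ x) (φ y) = dist x y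

def Plastic (A : Set ℝ) : Prop :=
  ∀ φ : ℝ → ℝ, Set.BijOn φ A A → NonexpOn φ A → IsomOn φ A

theorem equal_halfopen_intervals_not_plastic (a b : ℤ → ℝ) (L g : ℝ)
    (hL : 0 < L) (hg : 0 < g)
    (hba : ∀ i : ℤ, b i < a (i + 1))
    (hlen : ∀ i : ℤ, b i - a i = L)
    (hgap : ∀ i : ℤ, a (i + 1) - b i = g) :
    ¬ Plastic (⋃ i : ℤ, Set.Ico (a i) (b i)) := by
  intro hP
  set A : Set ℝ := ⋃ i : ℤ, Set.Ico (a i) (b i) with hA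
  set c : ℝ := L + g with hc
  have hcpos : 0 < c := by simp [hc]; linarith
  have hstep : ∀ i : ℤ, a (i + 1) = a i + c := by
    intro i; have h1 := hlen i; have h2 := hgap i; simp only [hc]; linarith
  have key : ∀ i : ℤ, a i = a 0 + i * c := by
    intro i
    induction i using Int.induction_on with
    | zero => simp
    | succ k ih => have := hstep k; push_cast; push_cast at ih; linarith
    | pred k ih =>
        have h := hstep (-(k : ℤ) - 1)
        have e : (-(k : ℤ) - 1) + 1 = -k := by ring
        rw [e] at h
        push_cast at ih h ⊢
        linarith
  have keyb : ∀ i : ℤ, b i = a 0 + i * c + L := by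
    intro i; have := hlen i; have := key i; linarith
  have ha1 : a 1 = a 0 + c := by have := key 1; push_cast at this; linarith
  have hb0 : b 0 = a 0 + L := by have := keyb 0; push_cast at this; linarith
  have hb1 : b 1 = a 0 + c + L := by have := keyb 1; push_cast at this; linarith
  have ha2 : a 2 = a 0 + 2 * c := by have := key 2; push_cast at this; linarith
  -- gap lemma : points of A above b i are above a (i+1)
  have hgapA : ∀ y, y ∈ A → ∀ i : ℤ, b i ≤ y → a (i + 1) ≤ y := by
    intro y hy i hby
    simp only [hA, Set.mem_iUnion, Set.mem_Ico] at hy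
    obtain ⟨j, hj1, hj2⟩ := hy
    have hbi := keyb i
    have hbj := keyb j
    have h2 : (i : ℝ) * c < (j : ℝ) * c := by linarith
    have h3 : i < j := by
      by_contra h
      push_neg at h
      have : (j : ℝ) ≤ (i : ℝ) := by exact_mod_cast h
      nlinarith
    have h4 : (i : ℝ) + 1 ≤ (j : ℝ) := by exact_mod_cast h3
    have e1 : a (i + 1) = a 0 + ((i : ℝ) + 1) * c := by
      have := key (i + 1); push_cast at this; linarith
    have e2 : a j = a 0 + (j : ℝ) * c := key j
    nlinarith
  set F : ℝ → ℝ := fun x =>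
    if x < a 0 then x
    else if x < b 0 then a 0 + (x - a 0) / 2
    else if x < b 1 then a 0 + L / 2 + (x - a 1) / 2
    else x - c with hF
  -- strict monotonicity on A
  have hmono : ∀ x ∈ A, ∀ y ∈ A, x < y → F x < F y := by
    intro x hx y hy hxy
    have hga1 : b 0 ≤ y → a 1 ≤ y := by
      intro h; have := hgapA y hy 0 h; simpa using this
    simp only [hF]
    split_ifs with h1 h2 h3 h4 h5 h6 h7 h8 h9 h10 h11 h12 h13 h14 h15 <;>
      first
        | linarith
        | (have := hga1 (by linarith); linarith)
  -- the displacement F x - x is nonincreasing on all of ℝ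
  have hpsi : ∀ x y : ℝ, x ≤ y → F y - y ≤ F x - x := by
    intro x y hxy
    simp only [hF]
    split_ifs <;> linarith
  -- F maps A to A
  have hmaps : ∀ x ∈ A, F x ∈ A := by
    intro x hx
    simp only [hA, Set.mem_iUnion, Set.mem_Ico] at hx ⊢
    obtain ⟨i, hx1, hx2⟩ := hx
    have hai := key i
    have hbi := keyb i
    rcases lt_trichotomy i 0 with hi | hi | hi
    · -- i ≤ -1 : x < a 0, F x = x
      have hile : (i : ℝ) ≤ -1 := by
        have h' : i ≤ -1 := by omega
        exact_mod_cast h'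
      have hprod : (i : ℝ) * c ≤ (-1) * c := mul_le_mul_of_nonneg_right hile hcpos.le
      have hlt : x < a 0 := by linarith
      exact ⟨i, by simp only [hF]; rw [if_pos hlt]; exact ⟨hx1, hx2⟩⟩
    · subst hi
      refine ⟨0, ?_⟩
      simp only [hF]
      rw [if_neg (by linarith), if_pos (by linarith)]
      constructor <;> linarith
    · rcases lt_trichotomy i 1 with hi1 | hi1 | hi1
      · omega
      · subst hi1
        refine ⟨0, ?_⟩
        simp only [hF]
        rw [if_neg (by linarith), if_neg (by linarith), if_pos (by linarith)]
        constructor <;> linarith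
      · -- i ≥ 2
        have hige : (2 : ℝ) ≤ (i : ℝ) := by exact_mod_cast hi1
        have hprod : (2 : ℝ) * c ≤ (i : ℝ) * c := mul_le_mul_of_nonneg_right hige hcpos.le
        have hxa2 : b 1 ≤ x := by linarith
        refine ⟨i - 1, ?_⟩
        have hai1 : a (i - 1) = a 0 + ((i : ℝ) - 1) * c := by
          have := key (i - 1); push_cast at this; linarith
        have hbi1 : b (i - 1) = a 0 + ((i : ℝ) - 1) * c + L := by
          have := keyb (i - 1); push_cast at this; linarith
        simp only [hF]
        rw [if_neg (by linarith), if_neg (by linarith), if_neg (by linarith)]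
        constructor <;> linarith
  -- surjectivity
  have hsurj : ∀ y ∈ A, ∃ x ∈ A, F x = y := by
    intro y hy
    simp only [hA, Set.mem_iUnion, Set.mem_Ico] at hy
    obtain ⟨j, hy1, hy2⟩ := hy
    have haj := key j
    have hbj := keyb j
    rcases lt_trichotomy j 0 with hj | hj | hj
    · have hjle : (j : ℝ) ≤ -1 := by
        have h' : j ≤ -1 := by omega
        exact_mod_cast h'
      have hprod : (j : ℝ) * c ≤ (-1) * c := mul_le_mul_of_nonneg_right hjle hcpos.le
      have hlt : y < a 0 := by linarith
      refine ⟨y, ?_, ?_⟩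
      · simp only [hA, Set.mem_iUnion, Set.mem_Ico]; exact ⟨j, hy1, hy2⟩
      · simp only [hF]; rw [if_pos hlt]
    · subst hj
      by_cases hy3 : y < a 0 + L / 2
      · refine ⟨a 0 + 2 * (y - a 0), ?_, ?_⟩
        · simp only [hA, Set.mem_iUnion, Set.mem_Ico]
          exact ⟨0, by constructor <;> linarith⟩
        · simp only [hF]
          rw [if_neg (by linarith), if_pos (by linarith)]
          ring
      · push_neg at hy3
        refine ⟨a 1 + 2 * (y - a 0 - L / 2), ?_, ?_⟩
        · simp only [hA, Set.mem_iUnion, Set.mem_Ico]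
          exact ⟨1, by constructor <;> linarith⟩
        · simp only [hF]
          rw [if_neg (by linarith), if_neg (by linarith), if_pos (by linarith)]
          ring
    · -- j ≥ 1
      have hjge : (1 : ℝ) ≤ (j : ℝ) := by exact_mod_cast hj
      have hprod : (1 : ℝ) * c ≤ (j : ℝ) * c := mul_le_mul_of_nonneg_right hjge hcpos.le
      have haj1 : a (j + 1) = a 0 + ((j : ℝ) + 1) * c := by
        have := key (j + 1); push_cast at this; linarith
      have hbj1 : b (j + 1) = a 0 + ((j : ℝ) + 1) * c + L := by
        have := keyb (j + 1); push_cast at this; linarith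
      refine ⟨y + c, ?_, ?_⟩
      · simp only [hA, Set.mem_iUnion, Set.mem_Ico]
        exact ⟨j + 1, by constructor <;> linarith⟩
      · simp only [hF]
        rw [if_neg (by linarith), if_neg (by linarith), if_neg (by linarith)]
        ring
  have hbij : Set.BijOn F A A := by
    refine ⟨hmaps, ?_, ?_⟩
    · intro x hx y hy hxy
      rcases lt_trichotomy x y with h | h | h
      · exact absurd hxy (ne_of_lt (hmono x hx y hy h))
      · exact h
      · exact absurd hxy.symm (ne_of_lt (hmono y hy x hx h))
    · intro y hy
      obtain ⟨x, hx, hfx⟩ := hsurj y hy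
      exact ⟨x, hx, hfx⟩
  have hnonexp : NonexpOn F A := by
    have half : ∀ x ∈ A, ∀ y ∈ A, x ≤ y → dist (F x) (F y) ≤ dist x y := by
      intro x hx y hy hxy
      have h1 := hpsi x y hxy
      have h2 : F x ≤ F y := by
        rcases eq_or_lt_of_le hxy with rfl | h
        · exact le_refl _
        · exact le_of_lt (hmono x hx y hy h)
      rw [Real.dist_eq, Real.dist_eq]
      rw [abs_of_nonpos (by linarith), abs_of_nonpos (by linarith)]
      linarith
    intro x hx y hy
    rcases le_total x y with h | h
    · exact half x hx y hy h
    · rw [dist_comm, dist_comm x y]; exact half y hy x hx h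
  have hisom := hP F hbij hnonexp
  have hp0 : a 0 ∈ A := by
    simp only [hA, Set.mem_iUnion, Set.mem_Ico]
    exact ⟨0, le_refl _, by linarith⟩
  have hq0 : a 0 + L / 2 ∈ A := by
    simp only [hA, Set.mem_iUnion, Set.mem_Ico]
    exact ⟨0, by linarith, by linarith⟩
  have e1 : F (a 0) = a 0 := by
    simp only [hF]
    rw [if_neg (lt_irrefl _), if_pos (by linarith)]
    ring
  have e2 : F (a 0 + L / 2) = a 0 + L / 4 := by
    simp only [hF]
    rw [if_neg (by linarith), if_pos (by linarith)]
    ring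
  have := hisom (a 0) hp0 (a 0 + L / 2) hq0
  rw [Real.dist_eq, Real.dist_eq, e1, e2] at this
  rw [show a 0 - (a 0 + L / 4) = -(L / 4) by ring,
      show a 0 - (a 0 + L / 2) = -(L / 2) by ring,
      abs_neg, abs_neg, abs_of_nonneg (by linarith), abs_of_nonneg (by linarith)] at this
  linarith
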